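/- Let P be a lattice polygon in ℝ² all of whose lattice points are vertices of P. Then P is contained in a closed strip of lattice width one, i.e., there is a primitive linear functional ℓ : ℤ² → ℤ and an integer c with c ≤ ℓ(x) ≤ c + 1 for all x ∈ P. -/

import Mathlib

open Pointwise

/-- The lattice `ℤ²` viewed inside `ℝ²`. -/
def L2 : Set (ℝ × ℝ) := {x | (∃ m : ℤ, x.1 = (m : ℝ)) ∧ ∃ n : ℤ, x.2 = (n : ℝ)}

/-- A lattice polygon: the convex hull of a finite set of lattice points. -/
def IsLatticePolygon (P : Set (ℝ × ℝ)) : Prop :=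
  ∃ S : Finset (ℝ × ℝ), (S : Set (ℝ × ℝ)) ⊆ L2 ∧ P = convexHull ℝ (S : Set (ℝ × ℝ))

/-- Standard dot product on `ℝ²`. -/
def dot (u x : ℝ × ℝ) : ℝ := u.1 * x.1 + u.2 * x.2

/-- The normal cone of `P` at a point `x`: linear functionals maximized over `P` at `x`.
For `x` in the relative interior of a face `F`, this is the normal-fan cone of `F`. -/
def NCone (P : Set (ℝ × ℝ)) (x : ℝ × ℝ) : Set (ℝ × ℝ) :=
  {u : ℝ × ℝ | ∀ y ∈ P, dot u y ≤ dot u x}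

/-- The normal fan of `Q` coarsens that of `P`: every cone of the normal fan of `P`
is contained in a cone of the normal fan of `Q`. -/
def Coarsens (Q P : Set (ℝ × ℝ)) : Prop :=
  ∀ x ∈ P, ∃ y ∈ Q, NCone P x ⊆ NCone Q y

/-- An edge of a polygon: an extreme (face) subset which is a nondegenerate segment. -/
def IsEdge (P e : Set (ℝ × ℝ)) : Prop :=
  IsExtreme ℝ P e ∧ ∃ a b : ℝ × ℝ, a ≠ b ∧ e = segment ℝ a b

/-- A polygon in `ℝ²` is two-dimensional iff it has nonempty interior. -/
def IsTwoDim (P : Set (ℝ × ℝ)) : Prop := (interior P).Nonempty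

/-! ### Auxiliary machinery -/

noncomputable def ii (z : ℤ × ℤ) : ℝ × ℝ := ((z.1 : ℝ), (z.2 : ℝ))

lemma ii_inj : Function.Injective ii := by
  intro a b hab
  simp only [ii, Prod.mk.injEq] at hab
  exact Prod.ext (by exact_mod_cast hab.1) (by exact_mod_cast hab.2)

lemma smul_coord {x y z : ℝ × ℝ} {a b : ℝ} (h1 : a*x.1 + b*y.1 = z.1)
    (h2 : a*x.2 + b*y.2 = z.2) : a • x + b • y = z := by
  apply Prod.ext <;>
    simp only [Prod.fst_add, Prod.snd_add, Prod.smul_fst, Prod.smul_snd, smul_eq_mul]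
  exacts [h1, h2]

lemma combo3 {x y z : ℝ × ℝ} {a b c : ℝ} (ha : 0 ≤ a) (hb : 0 ≤ b) (hc : 0 ≤ c)
    (habc : a + b + c = 1) : a • x + b • y + c • z ∈ convexHull ℝ ({x, y, z} : Set (ℝ × ℝ)) := by
  have := Finset.centerMass_mem_convexHull (Finset.univ : Finset (Fin 3))
    (w := ![a, b, c]) (z := ![x, y, z]) (s := ({x, y, z} : Set (ℝ × ℝ)))
    (by intro i _; fin_cases i <;> simpa) (by simp [Fin.sum_univ_three, habc])
    (by intro i _; fin_cases i <;> simp)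
  simpa [Finset.centerMass, Fin.sum_univ_three, habc] using this

lemma convex_strip (a : ℝ × ℝ) (c : ℝ) :
    Convex ℝ {x : ℝ × ℝ | c ≤ dot a x ∧ dot a x ≤ c + 1} := by
  intro x hx y hy s t hs ht hst
  have hdot : dot a (s • x + t • y) = s * dot a x + t * dot a y := by
    simp only [dot, Prod.fst_add, Prod.snd_add, Prod.smul_fst, Prod.smul_snd, smul_eq_mul]
    ring
  obtain ⟨hx1, hx2⟩ := hx
  obtain ⟨hy1, hy2⟩ := hy
  constructor <;> rw [hdot]
  all_goals have hcc : s * c + t * c = c := by rw [← add_mul, hst, one_mul]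
  · linarith [mul_le_mul_of_nonneg_left hx1 hs, mul_le_mul_of_nonneg_left hy1 ht]
  · have hcc1 : s * (c+1) + t * (c+1) = c + 1 := by rw [← add_mul, hst, one_mul]
    linarith [mul_le_mul_of_nonneg_left hx2 hs, mul_le_mul_of_nonneg_left hy2 ht]

lemma extreme_mono {P T : Set (ℝ × ℝ)} (hTP : T ⊆ P) {x : ℝ × ℝ}
    (hx : x ∈ Set.extremePoints ℝ P) (hxT : x ∈ T) : x ∈ Set.extremePoints ℝ T := by
  rw [mem_extremePoints] at hx ⊢
  exact ⟨hxT, fun x₁ h₁ x₂ h₂ hseg => hx.2 x₁ (hTP h₁) x₂ (hTP h₂) hseg⟩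

lemma dualbasis (u v : ℤ × ℤ) (h : u.1*v.2 - u.2*v.1 = 1 ∨ u.1*v.2 - u.2*v.1 = -1) :
    ∃ a1 a2 : ℤ, Int.gcd a1 a2 = 1 ∧ a1*u.1 + a2*u.2 = 1 ∧ a1*v.1 + a2*v.2 = 0 := by
  have hsq : (u.1*v.2 - u.2*v.1)*(u.1*v.2 - u.2*v.1) = 1 := by
    rcases h with h | h <;> rw [h] <;> norm_num
  refine ⟨(u.1*v.2 - u.2*v.1)*v.2, -((u.1*v.2 - u.2*v.1)*v.1), ?_, ?_, by ring⟩
  · rw [← Int.isCoprime_iff_gcd_eq_one]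
    exact ⟨u.1, u.2, by linear_combination hsq⟩
  · linear_combination hsq

lemma lemA (u v : ℤ × ℤ) (hD : u.1*v.2 - u.2*v.1 ≠ 0) (hD1 : u.1*v.2 - u.2*v.1 ≠ 1)
    (hD2 : u.1*v.2 - u.2*v.1 ≠ -1) :
    ∃ (z : ℤ × ℤ) (α β : ℝ), 0 ≤ α ∧ 0 ≤ β ∧ α + β ≤ 1 ∧
      (z.1 : ℝ) = α * u.1 + β * v.1 ∧ (z.2 : ℝ) = α * u.2 + β * v.2 ∧
      z ≠ 0 ∧ z ≠ u ∧ z ≠ v := by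
  -- Step 1: there is a lattice point not in the integer span of u, v
  have hz0 : ∃ z0 : ℤ × ℤ, ∀ m n : ℤ, z0.1 ≠ m*u.1+n*v.1 ∨ z0.2 ≠ m*u.2+n*v.2 := by
    by_contra hcon
    push_neg at hcon
    obtain ⟨m1, n1, e1', e2'⟩ := hcon (1, 0)
    obtain ⟨m2, n2, e3', e4'⟩ := hcon (0, 1)
    have e1 : (1:ℤ) = m1*u.1+n1*v.1 := e1'
    have e2 : (0:ℤ) = m1*u.2+n1*v.2 := e2'
    have e3 : (0:ℤ) = m2*u.1+n2*v.1 := e3'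
    have e4 : (1:ℤ) = m2*u.2+n2*v.2 := e4'
    have key : (m1*n2 - n1*m2) * (u.1*v.2 - u.2*v.1) = 1 := by
      linear_combination (-(m2*u.2+n2*v.2))*e1 + (m2*u.1+n2*v.1)*e2 - e4
    have : IsUnit (u.1*v.2 - u.2*v.1) :=
      isUnit_iff_exists_inv.mpr ⟨m1*n2 - n1*m2, by linear_combination key⟩
    rcases Int.isUnit_iff.mp this with h | h
    · exact hD1 h
    · exact hD2 h
  obtain ⟨z0, hz0⟩ := hz0
  -- Step 2: Cramer coordinates over ℝ
  have hDr : ((u.1:ℝ)*v.2 - (u.2:ℝ)*v.1) ≠ 0 := by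
    intro hc
    apply hD
    have : ((u.1*v.2 - u.2*v.1 : ℤ) : ℝ) = 0 := by push_cast; linarith
    exact_mod_cast this
  set Dr : ℝ := (u.1:ℝ)*v.2 - (u.2:ℝ)*v.1 with hDrdef
  have huniq : ∀ γ δ : ℝ, γ*u.1 + δ*v.1 = 0 → γ*u.2 + δ*v.2 = 0 → γ = 0 ∧ δ = 0 := by
    intro γ δ h1 h2
    have hg : γ * Dr = 0 := by rw [hDrdef]; linear_combination (v.2:ℝ)*h1 - (v.1:ℝ)*h2
    have hd : δ * Dr = 0 := by rw [hDrdef]; linear_combination (u.1:ℝ)*h2 - (u.2:ℝ)*h1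
    exact ⟨by rcases mul_eq_zero.mp hg with h|h; exacts [h, absurd h hDr],
           by rcases mul_eq_zero.mp hd with h|h; exacts [h, absurd h hDr]⟩
  set α0 : ℝ := ((z0.1:ℝ)*v.2 - (z0.2:ℝ)*v.1)/Dr with hα0def
  set β0 : ℝ := ((u.1:ℝ)*z0.2 - (u.2:ℝ)*z0.1)/Dr with hβ0def
  have hc1 : (z0.1:ℝ) = α0*u.1 + β0*v.1 := by
    rw [hα0def, hβ0def, div_mul_eq_mul_div, div_mul_eq_mul_div, ← add_div, eq_div_iff hDr, hDrdef]; ring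
  have hc2 : (z0.2:ℝ) = α0*u.2 + β0*v.2 := by
    rw [hα0def, hβ0def, div_mul_eq_mul_div, div_mul_eq_mul_div, ← add_div, eq_div_iff hDr, hDrdef]; ring
  set m : ℤ := ⌊α0⌋
  set n : ℤ := ⌊β0⌋
  set α : ℝ := α0 - m with hαdef
  set β : ℝ := β0 - n with hβdef
  have hα0' : 0 ≤ α := sub_nonneg.2 (Int.floor_le α0)
  have hα1 : α < 1 := by have := Int.lt_floor_add_one α0; rw [hαdef]; push_cast; linarith
  have hβ0' : 0 ≤ β := sub_nonneg.2 (Int.floor_le β0)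
  have hβ1 : β < 1 := by have := Int.lt_floor_add_one β0; rw [hβdef]; push_cast; linarith
  obtain ⟨z1, hz11, hz12⟩ : ∃ z1 : ℤ × ℤ, z1.1 = z0.1 - (m*u.1+n*v.1) ∧
      z1.2 = z0.2 - (m*u.2+n*v.2) := ⟨(z0.1 - (m*u.1+n*v.1), z0.2 - (m*u.2+n*v.2)), rfl, rfl⟩
  have hz1a : (z1.1 : ℝ) = α*u.1 + β*v.1 := by
    rw [hz11]; push_cast; rw [hc1, hαdef, hβdef]; ring
  have hz1b : (z1.2 : ℝ) = α*u.2 + β*v.2 := by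
    rw [hz12]; push_cast; rw [hc2, hαdef, hβdef]; ring
  have hne : ¬(α = 0 ∧ β = 0) := by
    rintro ⟨h1, h2⟩
    have e1 : (z1.1 : ℝ) = 0 := by rw [hz1a, h1, h2]; ring
    have e2 : (z1.2 : ℝ) = 0 := by rw [hz1b, h1, h2]; ring
    have f1 : z1.1 = 0 := by exact_mod_cast e1
    have f2 : z1.2 = 0 := by exact_mod_cast e2
    rw [hz11] at f1
    rw [hz12] at f2
    rcases hz0 m n with hne1 | hne1
    · exact hne1 (by linarith)
    · exact hne1 (by linarith)
  rcases le_or_gt (α + β) 1 with hle | hgt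
  · refine ⟨z1, α, β, hα0', hβ0', hle, hz1a, hz1b, ?_, ?_, ?_⟩
    · intro hzz
      rw [Prod.ext_iff] at hzz
      have e1 : α*u.1 + β*v.1 = 0 := by
        rw [← hz1a, hzz.1]; simp
      have e2 : α*u.2 + β*v.2 = 0 := by
        rw [← hz1b, hzz.2]; simp
      exact hne (huniq α β e1 e2)
    · intro hzz
      rw [Prod.ext_iff] at hzz
      have e1 : (α-1)*u.1 + β*v.1 = 0 := by
        have : (z1.1:ℝ) = (u.1:ℝ) := by exact_mod_cast hzz.1
        rw [hz1a] at this; linarith [this]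
      have e2 : (α-1)*u.2 + β*v.2 = 0 := by
        have : (z1.2:ℝ) = (u.2:ℝ) := by exact_mod_cast hzz.2
        rw [hz1b] at this; linarith [this]
      have := (huniq _ _ e1 e2).1
      linarith
    · intro hzz
      rw [Prod.ext_iff] at hzz
      have e1 : α*u.1 + (β-1)*v.1 = 0 := by
        have : (z1.1:ℝ) = (v.1:ℝ) := by exact_mod_cast hzz.1
        rw [hz1a] at this; linarith [this]
      have e2 : α*u.2 + (β-1)*v.2 = 0 := by
        have : (z1.2:ℝ) = (v.2:ℝ) := by exact_mod_cast hzz.2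
        rw [hz1b] at this; linarith [this]
      have := (huniq _ _ e1 e2).2
      linarith
  · refine ⟨(u.1+v.1-z1.1, u.2+v.2-z1.2), 1-α, 1-β, by linarith, by linarith, by linarith,
      ?_, ?_, ?_, ?_, ?_⟩
    · show ((u.1+v.1-z1.1 : ℤ):ℝ) = _
      push_cast; rw [hz1a]; ring
    · show ((u.2+v.2-z1.2 : ℤ):ℝ) = _
      push_cast; rw [hz1b]; ring
    · intro hzz
      rw [Prod.ext_iff] at hzz
      have e1 : (1-α)*u.1 + (1-β)*v.1 = 0 := by
        have h1 : ((u.1+v.1-z1.1 : ℤ):ℝ) = 0 := by exact_mod_cast hzz.1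
        push_cast at h1; rw [hz1a] at h1; linarith
      have e2 : (1-α)*u.2 + (1-β)*v.2 = 0 := by
        have h1 : ((u.2+v.2-z1.2 : ℤ):ℝ) = 0 := by exact_mod_cast hzz.2
        push_cast at h1; rw [hz1b] at h1; linarith
      have := (huniq _ _ e1 e2).1
      linarith
    · intro hzz
      rw [Prod.ext_iff] at hzz
      have e1 : (-α)*u.1 + (1-β)*v.1 = 0 := by
        have h1 : ((u.1+v.1-z1.1 : ℤ):ℝ) = (u.1:ℝ) := by exact_mod_cast hzz.1
        push_cast at h1; rw [hz1a] at h1; linarith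
      have e2 : (-α)*u.2 + (1-β)*v.2 = 0 := by
        have h1 : ((u.2+v.2-z1.2 : ℤ):ℝ) = (u.2:ℝ) := by exact_mod_cast hzz.2
        push_cast at h1; rw [hz1b] at h1; linarith
      have := (huniq _ _ e1 e2).2
      linarith
    · intro hzz
      rw [Prod.ext_iff] at hzz
      have e1 : (1-α)*u.1 + (-β)*v.1 = 0 := by
        have h1 : ((u.1+v.1-z1.1 : ℤ):ℝ) = (v.1:ℝ) := by exact_mod_cast hzz.1
        push_cast at h1; rw [hz1a] at h1; linarith
      have e2 : (1-α)*u.2 + (-β)*v.2 = 0 := by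
        have h1 : ((u.2+v.2-z1.2 : ℤ):ℝ) = (v.2:ℝ) := by exact_mod_cast hzz.2
        push_cast at h1; rw [hz1b] at h1; linarith
      have := (huniq _ _ e1 e2).1
      linarith

lemma lemB (P : Set (ℝ × ℝ)) (p q r : ℤ × ℤ)
    (hp : ii p ∈ P) (hq : ii q ∈ P) (hr : ii r ∈ P)
    (hpe : ii p ∈ Set.extremePoints ℝ P) (hqe : ii q ∈ Set.extremePoints ℝ P)
    (hre : ii r ∈ Set.extremePoints ℝ P)
    (hpq : p ≠ q) (hpr : p ≠ r) (hqr : q ≠ r)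
    (hdet : (q.1 - p.1) * (r.2 - p.2) - (q.2 - p.2) * (r.1 - p.1) = 0) : False := by
  set U1 : ℝ := (q.1 : ℝ) - p.1 with hU1
  set U2 : ℝ := (q.2 : ℝ) - p.2 with hU2
  set V1 : ℝ := (r.1 : ℝ) - p.1 with hV1
  set V2 : ℝ := (r.2 : ℝ) - p.2 with hV2
  have hdetR : U1 * V2 - U2 * V1 = 0 := by
    rw [hU1, hU2, hV1, hV2]
    have : (((q.1 - p.1) * (r.2 - p.2) - (q.2 - p.2) * (r.1 - p.1) : ℤ) : ℝ) = 0 := by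
      rw [hdet]; simp
    push_cast at this; linarith
  have hUne : ¬(U1 = 0 ∧ U2 = 0) := by
    rintro ⟨h1, h2⟩
    apply hpq
    apply ii_inj
    simp only [ii, Prod.mk.injEq]
    constructor <;> [linarith [h1]; linarith [h2]]
  obtain ⟨t, ht1, ht2⟩ : ∃ t : ℝ, V1 = t * U1 ∧ V2 = t * U2 := by
    by_cases h1 : U1 = 0
    · have h2 : U2 ≠ 0 := fun hc => hUne ⟨h1, hc⟩
      refine ⟨V2 / U2, ?_, by field_simp⟩
      have : U2 * V1 = 0 := by rw [h1] at hdetR; linarith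
      rcases mul_eq_zero.mp this with h | h
      · exact absurd h h2
      · rw [h, h1]; ring
    · refine ⟨V1 / U1, by field_simp, ?_⟩
      rw [div_mul_eq_mul_div, eq_div_iff h1]
      linear_combination hdetR
  have htne0 : t ≠ 0 := by
    intro hc
    rw [hc, zero_mul] at ht1 ht2
    exact hpr (ii_inj (by simp only [ii, Prod.mk.injEq]; constructor <;>
      [linarith [ht1]; linarith [ht2]]))
  have htne1 : t ≠ 1 := by
    intro hc
    rw [hc, one_mul] at ht1 ht2
    exact hqr (ii_inj (by simp only [ii, Prod.mk.injEq]; constructor <;>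
      [linarith [ht1]; linarith [ht2]]))
  rcases lt_trichotomy t 0 with ht | ht | ht
  · -- p between r and q
    have hmem : ii p ∈ openSegment ℝ (ii r) (ii q) := by
      have h1t : (1:ℝ) - t ≠ 0 := by intro hc; linarith
      have h1tpos : (0:ℝ) < 1 - t := by linarith
      refine ⟨1/(1-t), 1 - 1/(1-t), by positivity, ?_, by ring, ?_⟩
      · have : 1/(1-t) < 1 := by
          rw [div_lt_one (by linarith)]; linarith
        linarith
      · apply smul_coord
        · show 1/(1-t) * (r.1:ℝ) + (1 - 1/(1-t)) * (q.1:ℝ) = (p.1:ℝ)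
          field_simp
          nlinarith [ht1]
        · show 1/(1-t) * (r.2:ℝ) + (1 - 1/(1-t)) * (q.2:ℝ) = (p.2:ℝ)
          field_simp
          nlinarith [ht2]
    have := ((mem_extremePoints.mp hpe).2 (ii r) hr (ii q) hq hmem).1
    exact hpr (ii_inj this.symm)
  · exact htne0 ht
  · rcases lt_or_ge t 1 with ht' | ht'
    · -- r between p and q
      have hmem : ii r ∈ openSegment ℝ (ii p) (ii q) := by
        refine ⟨1 - t, t, by linarith, ht, by ring, ?_⟩
        apply smul_coord
        · show (1-t) * (p.1:ℝ) + t * (q.1:ℝ) = (r.1:ℝ)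
          nlinarith [ht1]
        · show (1-t) * (p.2:ℝ) + t * (q.2:ℝ) = (r.2:ℝ)
          nlinarith [ht2]
      have := ((mem_extremePoints.mp hre).2 (ii p) hp (ii q) hq hmem).1
      exact hpr (ii_inj this)
    · have ht'' : 1 < t := lt_of_le_of_ne ht' (Ne.symm htne1)
      -- q between p and r
      have hmem : ii q ∈ openSegment ℝ (ii p) (ii r) := by
        refine ⟨1 - 1/t, 1/t, ?_, one_div_pos.mpr (by linarith), by ring, ?_⟩
        · have : 1/t < 1 := by rw [div_lt_one (by linarith)]; linarith
          linarith
        · apply smul_coord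
          · show (1 - 1/t) * (p.1:ℝ) + 1/t * (r.1:ℝ) = (q.1:ℝ)
            field_simp
            nlinarith [ht1]
          · show (1 - 1/t) * (p.2:ℝ) + 1/t * (r.2:ℝ) = (q.2:ℝ)
            field_simp
            nlinarith [ht2]
      have := ((mem_extremePoints.mp hqe).2 (ii p) hp (ii r) hr hmem).1
      exact hpq (ii_inj this)

theorem all_lattice_points_vertices_implies_thin_strip
    (P : Set (ℝ × ℝ)) (hP : IsLatticePolygon P)
    (h : ∀ x ∈ P, x ∈ L2 → x ∈ Set.extremePoints ℝ P) :
    ∃ a : ℤ × ℤ, Int.gcd a.1 a.2 = 1 ∧ ∃ c : ℤ,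
      ∀ x ∈ P, (c : ℝ) ≤ dot ((a.1 : ℝ), (a.2 : ℝ)) x ∧
        dot ((a.1 : ℝ), (a.2 : ℝ)) x ≤ (c : ℝ) + 1 := by
  classical
  obtain ⟨S, hSL, rfl⟩ := hP
  set f : ℝ × ℝ → ℤ × ℤ := fun x => (⌊x.1⌋, ⌊x.2⌋) with hf
  set S' : Finset (ℤ × ℤ) := S.image f with hS'
  have hback : ∀ x ∈ S, ii (f x) = x := by
    intro x hx
    obtain ⟨⟨m, hm⟩, ⟨n, hn⟩⟩ := hSL hx
    have hx' : x = ((m:ℝ), (n:ℝ)) := Prod.ext hm hn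
    rw [hx']
    simp [ii, hf]
  have himg : ii '' (S' : Set (ℤ × ℤ)) = (S : Set (ℝ × ℝ)) := by
    ext x
    constructor
    · rintro ⟨z, hz, rfl⟩
      rw [hS'] at hz
      simp only [Finset.coe_image, Set.mem_image] at hz
      obtain ⟨y, hy, rfl⟩ := hz
      rw [hback y hy]; exact hy
    · intro hx
      refine ⟨f x, ?_, hback x hx⟩
      rw [hS']
      simp only [Finset.coe_image, Set.mem_image]
      exact ⟨x, hx, rfl⟩
  have hmem : ∀ z ∈ S', ii z ∈ convexHull ℝ (S : Set (ℝ × ℝ)) := by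
    intro z hz
    apply subset_convexHull
    rw [← himg]
    exact ⟨z, hz, rfl⟩
  have hii_lat : ∀ z : ℤ × ℤ, ii z ∈ L2 := fun z => ⟨⟨z.1, rfl⟩, ⟨z.2, rfl⟩⟩
  have hext : ∀ z : ℤ × ℤ, ii z ∈ convexHull ℝ (S : Set (ℝ × ℝ)) →
      ii z ∈ Set.extremePoints ℝ (convexHull ℝ (S : Set (ℝ × ℝ))) :=
    fun z hz => h _ hz (hii_lat z)
  have hkey : ∀ z : ℤ × ℤ, ii z ∈ convexHull ℝ (S : Set (ℝ × ℝ)) → z ∈ S' := by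
    intro z hz
    have h1 := extremePoints_convexHull_subset (hext z hz)
    rw [← himg] at h1
    obtain ⟨w, hw, hwz⟩ := h1
    rwa [← ii_inj hwz]
  -- the closing step
  have close : ∀ (a1 a2 c : ℤ),
      (∀ z ∈ S', a1*z.1 + a2*z.2 = c ∨ a1*z.1 + a2*z.2 = c+1) →
      ∀ x ∈ convexHull ℝ (S : Set (ℝ × ℝ)),
        (c : ℝ) ≤ dot ((a1 : ℝ), (a2 : ℝ)) x ∧ dot ((a1 : ℝ), (a2 : ℝ)) x ≤ (c : ℝ) + 1 := by
    intro a1 a2 c hv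
    have hsub : convexHull ℝ (S : Set (ℝ × ℝ)) ⊆
        {x : ℝ × ℝ | (c:ℝ) ≤ dot ((a1:ℝ), (a2:ℝ)) x ∧ dot ((a1:ℝ), (a2:ℝ)) x ≤ (c:ℝ) + 1} := by
      apply convexHull_min ?_ (convex_strip ((a1:ℝ), (a2:ℝ)) c)
      intro x hx
      rw [← himg] at hx
      obtain ⟨z, hz, rfl⟩ := hx
      have hzval := hv z hz
      have hd : dot ((a1:ℝ), (a2:ℝ)) (ii z) = ((a1*z.1 + a2*z.2 : ℤ) : ℝ) := by
        simp only [dot, ii]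
        push_cast
        ring
      refine ⟨?_, ?_⟩ <;> rw [hd] <;>
        (rcases hzval with h1 | h1 <;> rw [h1] <;> push_cast <;> linarith)
    exact fun x hx => hsub hx
  -- determinants of triangles with vertices in S' are unimodular
  have detC : ∀ p ∈ S', ∀ q ∈ S', ∀ r ∈ S', p ≠ q → p ≠ r → q ≠ r →
      ((q.1-p.1)*(r.2-p.2) - (q.2-p.2)*(r.1-p.1) = 1 ∨
       (q.1-p.1)*(r.2-p.2) - (q.2-p.2)*(r.1-p.1) = -1) := by
    intro p hpS q hqS r hrS hpq hpr hqr
    have hD0 : (q.1-p.1)*(r.2-p.2) - (q.2-p.2)*(r.1-p.1) ≠ 0 := by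
      intro hc
      exact lemB (convexHull ℝ (S : Set (ℝ × ℝ))) p q r (hmem p hpS) (hmem q hqS) (hmem r hrS)
        (hext p (hmem p hpS)) (hext q (hmem q hqS)) (hext r (hmem r hrS)) hpq hpr hqr hc
    by_contra hcon
    push_neg at hcon
    obtain ⟨hD1, hD2⟩ := hcon
    obtain ⟨z, α, β, hα, hβ, hαβ, hz1, hz2, hz0, hzu, hzv⟩ :=
      lemA (q.1-p.1, q.2-p.2) (r.1-p.1, r.2-p.2) hD0 hD1 hD2
    set zs : ℤ × ℤ := (p.1 + z.1, p.2 + z.2) with hzs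
    have hzscoord : ii zs = (1-α-β) • ii p + (α • ii q + β • ii r) := by
      apply Prod.ext
      · show ((p.1 + z.1 : ℤ) : ℝ) = _
        have : ((1-α-β) • ii p + (α • ii q + β • ii r)).1
            = (1-α-β) * (p.1:ℝ) + (α * (q.1:ℝ) + β * (r.1:ℝ)) := by
          simp only [Prod.fst_add, Prod.smul_fst, smul_eq_mul, ii]
        rw [this]
        push_cast
        push_cast at hz1
        linarith
      · show ((p.2 + z.2 : ℤ) : ℝ) = _
        have : ((1-α-β) • ii p + (α • ii q + β • ii r)).2
            = (1-α-β) * (p.2:ℝ) + (α * (q.2:ℝ) + β * (r.2:ℝ)) := by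
          simp only [Prod.snd_add, Prod.smul_snd, smul_eq_mul, ii]
        rw [this]
        push_cast
        push_cast at hz2
        linarith
    have hzsmem : ii zs ∈ convexHull ℝ ({ii p, ii q, ii r} : Set (ℝ × ℝ)) := by
      rw [hzscoord, ← add_assoc]
      exact combo3 (by linarith) hα hβ (by ring)
    have htriP : convexHull ℝ ({ii p, ii q, ii r} : Set (ℝ × ℝ)) ⊆
        convexHull ℝ (S : Set (ℝ × ℝ)) := by
      apply convexHull_min ?_ (convex_convexHull ℝ _)
      intro x hx
      rcases hx with hx | hx | hx
      · rw [hx]; exact hmem p hpS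
      · rw [hx]; exact hmem q hqS
      · rw [hx]; exact hmem r hrS
    have hzsP : ii zs ∈ convexHull ℝ (S : Set (ℝ × ℝ)) := htriP hzsmem
    have hzsext := extreme_mono htriP (hext zs hzsP) hzsmem
    have hzsvert := extremePoints_convexHull_subset hzsext
    rcases hzsvert with hv | hv | hv
    · apply hz0
      have := ii_inj hv
      rw [hzs] at this
      rw [Prod.ext_iff] at this ⊢
      simp only [Prod.fst_zero, Prod.snd_zero]
      constructor
      · have := this.1; simp only at this ⊢; omega
      · have := this.2; simp only at this ⊢; omega
    · apply hzu
      have := ii_inj hv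
      rw [hzs] at this
      rw [Prod.ext_iff] at this ⊢
      constructor
      · have := this.1; simp only at this ⊢; omega
      · have := this.2; simp only at this ⊢; omega
    · apply hzv
      have := ii_inj hv
      rw [hzs] at this
      rw [Prod.ext_iff] at this ⊢
      constructor
      · have := this.1; simp only at this ⊢; omega
      · have := this.2; simp only at this ⊢; omega
  -- the points of S' are pairwise incongruent mod 2, so S' has at most 4 points
  have hinj : Set.InjOn (fun z : ℤ × ℤ => ((z.1 : ZMod 2), (z.2 : ZMod 2))) (S' : Set (ℤ × ℤ)) := by
    intro z hz w hw hzw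
    by_contra hne
    simp only [Prod.mk.injEq] at hzw
    have h1 : (2:ℤ) ∣ w.1 - z.1 := Int.ModEq.dvd ((ZMod.intCast_eq_intCast_iff _ _ _).mp hzw.1)
    have h2 : (2:ℤ) ∣ w.2 - z.2 := Int.ModEq.dvd ((ZMod.intCast_eq_intCast_iff _ _ _).mp hzw.2)
    obtain ⟨k1, hk1⟩ := h1
    obtain ⟨k2, hk2⟩ := h2
    have hzS : z ∈ S' := hz
    have hwS : w ∈ S' := hw
    set m : ℤ × ℤ := (z.1 + k1, z.2 + k2) with hm
    have him : (1/2 : ℝ) • ii z + (1/2 : ℝ) • ii w = ii m := by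
      apply smul_coord
      · show (1/2 : ℝ) * (z.1:ℝ) + (1/2:ℝ) * (w.1:ℝ) = ((z.1 + k1 : ℤ):ℝ)
        have : (w.1:ℝ) - (z.1:ℝ) = 2 * (k1:ℝ) := by exact_mod_cast hk1
        push_cast
        linarith
      · show (1/2 : ℝ) * (z.2:ℝ) + (1/2:ℝ) * (w.2:ℝ) = ((z.2 + k2 : ℤ):ℝ)
        have : (w.2:ℝ) - (z.2:ℝ) = 2 * (k2:ℝ) := by exact_mod_cast hk2
        push_cast
        linarith
    have hmP : ii m ∈ convexHull ℝ (S : Set (ℝ × ℝ)) := by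
      rw [← him]
      exact (convex_convexHull ℝ _) (hmem z hzS) (hmem w hwS) (by norm_num) (by norm_num)
        (by norm_num)
    have hzw' : z ≠ w := hne
    have hiizw : ii z ≠ ii w := fun hc => hzw' (ii_inj hc)
    have hseg : ii m ∈ openSegment ℝ (ii z) (ii w) :=
      ⟨1/2, 1/2, by norm_num, by norm_num, by norm_num, him⟩
    have := ((mem_extremePoints.mp (hext m hmP)).2 (ii z) (hmem z hzS) (ii w) (hmem w hwS) hseg)
    have hzm : z = m := ii_inj this.1
    have hwm : w = m := ii_inj this.2
    apply hzw'
    rw [hzm, hwm]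
  have hcard : S'.card ≤ 4 := by
    have hle := Finset.card_le_card_of_injOn (fun z : ℤ × ℤ => ((z.1 : ZMod 2), (z.2 : ZMod 2)))
      (fun z _ => Finset.mem_univ _) hinj
    have : (Finset.univ : Finset (ZMod 2 × ZMod 2)).card = 4 := by decide
    omega
  obtain hc0 | hc1 | hc2 | hc3 | hc4 :
      S'.card = 0 ∨ S'.card = 1 ∨ S'.card = 2 ∨ S'.card = 3 ∨ S'.card = 4 := by omega
  · -- empty
    refine ⟨(1, 0), by decide, 0, ?_⟩
    have hSe : (S : Set (ℝ × ℝ)) = ∅ := by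
      rw [← himg, Finset.card_eq_zero.mp hc0]
      simp
    rw [hSe, convexHull_empty]
    intro x hx
    exact absurd hx (Set.notMem_empty x)
  · -- a single point
    obtain ⟨p, hS1⟩ := Finset.card_eq_one.mp hc1
    refine ⟨(1, 0), by decide, p.1, ?_⟩
    apply close 1 0 p.1
    intro z hz
    rw [hS1, Finset.mem_singleton] at hz
    subst hz
    left
    ring
  · -- a segment
    obtain ⟨p, q, hpq, hS2⟩ := Finset.card_eq_two.mp hc2
    have hvne : ¬(q.1 - p.1 = 0 ∧ q.2 - p.2 = 0) := by
      rintro ⟨h1, h2⟩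
      exact hpq (Prod.ext (by omega) (by omega)).symm
    have hgne : Int.gcd (q.1-p.1) (q.2-p.2) ≠ 0 := by
      intro hc
      exact hvne (Int.gcd_eq_zero_iff.mp hc)
    have hgpos : 0 < Int.gcd (q.1-p.1) (q.2-p.2) := Nat.pos_of_ne_zero hgne
    have hgz : ((Int.gcd (q.1-p.1) (q.2-p.2) : ℤ)) ≠ 0 := by exact_mod_cast hgne
    have hmul1 : (Int.gcd (q.1-p.1) (q.2-p.2) : ℤ) * ((q.1-p.1) / (Int.gcd (q.1-p.1) (q.2-p.2) : ℤ)) = q.1-p.1 :=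
      Int.mul_ediv_cancel' (Int.gcd_dvd_left _ _)
    have hmul2 : (Int.gcd (q.1-p.1) (q.2-p.2) : ℤ) * ((q.2-p.2) / (Int.gcd (q.1-p.1) (q.2-p.2) : ℤ)) = q.2-p.2 :=
      Int.mul_ediv_cancel' (Int.gcd_dvd_right _ _)
    refine ⟨(-((q.2-p.2) / (Int.gcd (q.1-p.1) (q.2-p.2) : ℤ)),
            (q.1-p.1) / (Int.gcd (q.1-p.1) (q.2-p.2) : ℤ)), ?_, ?_⟩
    · show Int.gcd _ _ = 1
      rw [Int.gcd_def, Int.natAbs_neg, Nat.gcd_comm, ← Int.gcd_def]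
      exact Int.gcd_div_gcd_div_gcd hgpos
    · refine ⟨_, close _ _ (-((q.2-p.2) / (Int.gcd (q.1-p.1) (q.2-p.2) : ℤ)) * p.1 +
        ((q.1-p.1) / (Int.gcd (q.1-p.1) (q.2-p.2) : ℤ)) * p.2) ?_⟩
      intro z hz
      rw [hS2] at hz
      have hzero : -((q.2-p.2) / (Int.gcd (q.1-p.1) (q.2-p.2) : ℤ)) * (q.1-p.1) +
          ((q.1-p.1) / (Int.gcd (q.1-p.1) (q.2-p.2) : ℤ)) * (q.2-p.2) = 0 := by
        have hmm : (Int.gcd (q.1-p.1) (q.2-p.2) : ℤ) *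
            (-((q.2-p.2) / (Int.gcd (q.1-p.1) (q.2-p.2) : ℤ)) * (q.1-p.1) +
            ((q.1-p.1) / (Int.gcd (q.1-p.1) (q.2-p.2) : ℤ)) * (q.2-p.2)) = 0 := by
          linear_combination (q.2-p.2) * hmul1 - (q.1-p.1) * hmul2
        rcases mul_eq_zero.mp hmm with hcc | hcc
        · exact absurd hcc hgz
        · exact hcc
      rcases Finset.mem_insert.mp hz with hzp | hzq
      · subst hzp
        left
        ring
      · rw [Finset.mem_singleton] at hzq
        subst hzq
        left
        linear_combination hzero
  · -- a triangle
    obtain ⟨p, q, r, hpq, hpr, hqr, hS3⟩ := Finset.card_eq_three.mp hc3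
    have hpS : p ∈ S' := by rw [hS3]; simp
    have hqS : q ∈ S' := by rw [hS3]; simp
    have hrS : r ∈ S' := by rw [hS3]; simp
    have hd1 := detC p hpS q hqS r hrS hpq hpr hqr
    have hd1' : (q.1-p.1, q.2-p.2).1 * (r.1-q.1, r.2-q.2).2
        - (q.1-p.1, q.2-p.2).2 * (r.1-q.1, r.2-q.2).1 = 1 ∨
        (q.1-p.1, q.2-p.2).1 * (r.1-q.1, r.2-q.2).2
        - (q.1-p.1, q.2-p.2).2 * (r.1-q.1, r.2-q.2).1 = -1 := by
      show (q.1-p.1) * (r.2-q.2) - (q.2-p.2) * (r.1-q.1) = 1 ∨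
        (q.1-p.1) * (r.2-q.2) - (q.2-p.2) * (r.1-q.1) = -1
      rcases hd1 with hh | hh
      · exact Or.inl (by linear_combination hh)
      · exact Or.inr (by linear_combination hh)
    obtain ⟨a1, a2, hgcd, hau, hav⟩ := dualbasis (q.1-p.1, q.2-p.2) (r.1-q.1, r.2-q.2) hd1'
    have hau' : a1*(q.1-p.1) + a2*(q.2-p.2) = 1 := hau
    have hav' : a1*(r.1-q.1) + a2*(r.2-q.2) = 0 := hav
    refine ⟨(a1, a2), hgcd, a1*p.1 + a2*p.2, close a1 a2 _ ?_⟩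
    intro z hz
    rw [hS3] at hz
    rcases Finset.mem_insert.mp hz with hzz | hzz
    · subst hzz; left; ring
    · rcases Finset.mem_insert.mp hzz with hzz' | hzz'
      · subst hzz'; right; linear_combination hau'
      · rw [Finset.mem_singleton] at hzz'
        subst hzz'; right; linear_combination hau' + hav'
  · -- a quadrilateral
    obtain ⟨p3, T, hp3T, hins, hT3⟩ := Finset.card_eq_succ.mp hc4
    obtain ⟨p0, p1, p2, h01, h02, h12, hTeq⟩ := Finset.card_eq_three.mp hT3
    have hS4 : S' = insert p3 T := hins.symm
    have hp0S : p0 ∈ S' := by rw [hS4, hTeq]; simp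
    have hp1S : p1 ∈ S' := by rw [hS4, hTeq]; simp
    have hp2S : p2 ∈ S' := by rw [hS4, hTeq]; simp
    have hp3S : p3 ∈ S' := by rw [hS4]; simp
    have h30 : p3 ≠ p0 := by rintro rfl; exact hp3T (by rw [hTeq]; simp)
    have h31 : p3 ≠ p1 := by rintro rfl; exact hp3T (by rw [hTeq]; simp)
    have h32 : p3 ≠ p2 := by rintro rfl; exact hp3T (by rw [hTeq]; simp)
    have hdet1 := detC p0 hp0S p1 hp1S p2 hp2S h01 h02 h12
    have hdwv := detC p0 hp0S p3 hp3S p2 hp2S (Ne.symm h30) h02 h32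
    have hduw := detC p0 hp0S p1 hp1S p3 hp3S h01 (Ne.symm h30) (Ne.symm h31)
    have hd1sq : ((p1.1-p0.1)*(p2.2-p0.2) - (p1.2-p0.2)*(p2.1-p0.1)) *
        ((p1.1-p0.1)*(p2.2-p0.2) - (p1.2-p0.2)*(p2.1-p0.1)) = 1 := by
      rcases hdet1 with hh | hh <;> rw [hh] <;> norm_num
    have hs : ((p3.1-p0.1)*(p2.2-p0.2) - (p3.2-p0.2)*(p2.1-p0.1)) *
        ((p1.1-p0.1)*(p2.2-p0.2) - (p1.2-p0.2)*(p2.1-p0.1)) = 1 ∨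
        ((p3.1-p0.1)*(p2.2-p0.2) - (p3.2-p0.2)*(p2.1-p0.1)) *
        ((p1.1-p0.1)*(p2.2-p0.2) - (p1.2-p0.2)*(p2.1-p0.1)) = -1 := by
      rcases hdwv with hh | hh <;> rcases hdet1 with hh' | hh' <;> rw [hh, hh'] <;> norm_num
    have ht : ((p1.1-p0.1)*(p3.2-p0.2) - (p1.2-p0.2)*(p3.1-p0.1)) *
        ((p1.1-p0.1)*(p2.2-p0.2) - (p1.2-p0.2)*(p2.1-p0.1)) = 1 ∨
        ((p1.1-p0.1)*(p3.2-p0.2) - (p1.2-p0.2)*(p3.1-p0.1)) *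
        ((p1.1-p0.1)*(p2.2-p0.2) - (p1.2-p0.2)*(p2.1-p0.1)) = -1 := by
      rcases hduw with hh | hh <;> rcases hdet1 with hh' | hh' <;> rw [hh, hh'] <;> norm_num
    have hw1 : p3.1 - p0.1 =
        (((p3.1-p0.1)*(p2.2-p0.2) - (p3.2-p0.2)*(p2.1-p0.1)) *
         ((p1.1-p0.1)*(p2.2-p0.2) - (p1.2-p0.2)*(p2.1-p0.1))) * (p1.1-p0.1) +
        (((p1.1-p0.1)*(p3.2-p0.2) - (p1.2-p0.2)*(p3.1-p0.1)) *
         ((p1.1-p0.1)*(p2.2-p0.2) - (p1.2-p0.2)*(p2.1-p0.1))) * (p2.1-p0.1) := by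
      linear_combination (-(p3.1-p0.1))*hd1sq
    have hw2 : p3.2 - p0.2 =
        (((p3.1-p0.1)*(p2.2-p0.2) - (p3.2-p0.2)*(p2.1-p0.1)) *
         ((p1.1-p0.1)*(p2.2-p0.2) - (p1.2-p0.2)*(p2.1-p0.1))) * (p1.2-p0.2) +
        (((p1.1-p0.1)*(p3.2-p0.2) - (p1.2-p0.2)*(p3.1-p0.1)) *
         ((p1.1-p0.1)*(p2.2-p0.2) - (p1.2-p0.2)*(p2.1-p0.1))) * (p2.2-p0.2) := by
      linear_combination (-(p3.2-p0.2))*hd1sq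
    rcases hs with hs | hs
    · -- the value of the functional on p3 - p0 is 1 in direction u
      have hdet1' : (p1.1-p0.1, p1.2-p0.2).1 * (p2.1-p0.1, p2.2-p0.2).2
          - (p1.1-p0.1, p1.2-p0.2).2 * (p2.1-p0.1, p2.2-p0.2).1 = 1 ∨
          (p1.1-p0.1, p1.2-p0.2).1 * (p2.1-p0.1, p2.2-p0.2).2
          - (p1.1-p0.1, p1.2-p0.2).2 * (p2.1-p0.1, p2.2-p0.2).1 = -1 := hdet1
      obtain ⟨a1, a2, hgcd, hau, hav⟩ :=
        dualbasis (p1.1-p0.1, p1.2-p0.2) (p2.1-p0.1, p2.2-p0.2) hdet1'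
      have hau' : a1*(p1.1-p0.1) + a2*(p1.2-p0.2) = 1 := hau
      have hav' : a1*(p2.1-p0.1) + a2*(p2.2-p0.2) = 0 := hav
      have haw : a1*(p3.1-p0.1) + a2*(p3.2-p0.2) = 1 := by
        linear_combination a1*hw1 + a2*hw2 +
          (((p3.1-p0.1)*(p2.2-p0.2) - (p3.2-p0.2)*(p2.1-p0.1)) *
           ((p1.1-p0.1)*(p2.2-p0.2) - (p1.2-p0.2)*(p2.1-p0.1)))*hau' +
          (((p1.1-p0.1)*(p3.2-p0.2) - (p1.2-p0.2)*(p3.1-p0.1)) *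
           ((p1.1-p0.1)*(p2.2-p0.2) - (p1.2-p0.2)*(p2.1-p0.1)))*hav' + hs
      refine ⟨(a1, a2), hgcd, a1*p0.1 + a2*p0.2, close a1 a2 _ ?_⟩
      intro z hz
      rw [hS4, hTeq] at hz
      rcases Finset.mem_insert.mp hz with hzz | hzz
      · subst hzz; right; linear_combination haw
      · rcases Finset.mem_insert.mp hzz with hzz' | hzz'
        · subst hzz'; left; ring
        · rcases Finset.mem_insert.mp hzz' with hzz'' | hzz''
          · subst hzz''; right; linear_combination hau'
          · rw [Finset.mem_singleton] at hzz''
            subst hzz''; left; linear_combination hav'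
    rcases ht with ht | ht
    · -- direction v
      have hdet1' : (p2.1-p0.1, p2.2-p0.2).1 * (p1.1-p0.1, p1.2-p0.2).2
          - (p2.1-p0.1, p2.2-p0.2).2 * (p1.1-p0.1, p1.2-p0.2).1 = 1 ∨
          (p2.1-p0.1, p2.2-p0.2).1 * (p1.1-p0.1, p1.2-p0.2).2
          - (p2.1-p0.1, p2.2-p0.2).2 * (p1.1-p0.1, p1.2-p0.2).1 = -1 := by
        show (p2.1-p0.1) * (p1.2-p0.2) - (p2.2-p0.2) * (p1.1-p0.1) = 1 ∨
          (p2.1-p0.1) * (p1.2-p0.2) - (p2.2-p0.2) * (p1.1-p0.1) = -1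
        rcases hdet1 with hh | hh
        · exact Or.inr (by linear_combination -hh)
        · exact Or.inl (by linear_combination -hh)
      obtain ⟨a1, a2, hgcd, hau, hav⟩ :=
        dualbasis (p2.1-p0.1, p2.2-p0.2) (p1.1-p0.1, p1.2-p0.2) hdet1'
      have hau' : a1*(p2.1-p0.1) + a2*(p2.2-p0.2) = 1 := hau
      have hav' : a1*(p1.1-p0.1) + a2*(p1.2-p0.2) = 0 := hav
      have haw : a1*(p3.1-p0.1) + a2*(p3.2-p0.2) = 1 := by
        linear_combination a1*hw1 + a2*hw2 +
          (((p3.1-p0.1)*(p2.2-p0.2) - (p3.2-p0.2)*(p2.1-p0.1)) *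
           ((p1.1-p0.1)*(p2.2-p0.2) - (p1.2-p0.2)*(p2.1-p0.1)))*hav' +
          (((p1.1-p0.1)*(p3.2-p0.2) - (p1.2-p0.2)*(p3.1-p0.1)) *
           ((p1.1-p0.1)*(p2.2-p0.2) - (p1.2-p0.2)*(p2.1-p0.1)))*hau' + ht
      refine ⟨(a1, a2), hgcd, a1*p0.1 + a2*p0.2, close a1 a2 _ ?_⟩
      intro z hz
      rw [hS4, hTeq] at hz
      rcases Finset.mem_insert.mp hz with hzz | hzz
      · subst hzz; right; linear_combination haw
      · rcases Finset.mem_insert.mp hzz with hzz' | hzz'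
        · subst hzz'; left; ring
        · rcases Finset.mem_insert.mp hzz' with hzz'' | hzz''
          · subst hzz''; left; linear_combination hav'
          · rw [Finset.mem_singleton] at hzz''
            subst hzz''; right; linear_combination hau'
    · -- impossible: p0 would be the centroid of the other three points
      exfalso
      rw [hs, ht] at hw1 hw2
      have hW1 : (3:ℤ) * p0.1 = p1.1 + p2.1 + p3.1 := by linarith
      have hW2 : (3:ℤ) * p0.2 = p1.2 + p2.2 + p3.2 := by linarith
      have heq : ii p0 = (1/3:ℝ) • ii p1 + (1/3:ℝ) • ii p2 + (1/3:ℝ) • ii p3 := by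
        have hW1' : (3:ℝ) * (p0.1:ℝ) = (p1.1:ℝ) + (p2.1:ℝ) + (p3.1:ℝ) := by exact_mod_cast hW1
        have hW2' : (3:ℝ) * (p0.2:ℝ) = (p1.2:ℝ) + (p2.2:ℝ) + (p3.2:ℝ) := by exact_mod_cast hW2
        apply Prod.ext
        · show (p0.1:ℝ) = _
          have hco : ((1/3:ℝ) • ii p1 + (1/3:ℝ) • ii p2 + (1/3:ℝ) • ii p3).1
              = 1/3*(p1.1:ℝ) + 1/3*(p2.1:ℝ) + 1/3*(p3.1:ℝ) := by
            simp only [Prod.fst_add, Prod.smul_fst, smul_eq_mul, ii]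
          rw [hco]; linarith
        · show (p0.2:ℝ) = _
          have hco : ((1/3:ℝ) • ii p1 + (1/3:ℝ) • ii p2 + (1/3:ℝ) • ii p3).2
              = 1/3*(p1.2:ℝ) + 1/3*(p2.2:ℝ) + 1/3*(p3.2:ℝ) := by
            simp only [Prod.snd_add, Prod.smul_snd, smul_eq_mul, ii]
          rw [hco]; linarith
      have hmemtri : ii p0 ∈ convexHull ℝ ({ii p1, ii p2, ii p3} : Set (ℝ × ℝ)) := by
        rw [heq]
        exact combo3 (by norm_num) (by norm_num) (by norm_num) (by norm_num)
      have htriP : convexHull ℝ ({ii p1, ii p2, ii p3} : Set (ℝ × ℝ)) ⊆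
          convexHull ℝ (S : Set (ℝ × ℝ)) := by
        apply convexHull_min ?_ (convex_convexHull ℝ _)
        intro x hx
        rcases hx with hx | hx | hx
        · rw [hx]; exact hmem p1 hp1S
        · rw [hx]; exact hmem p2 hp2S
        · rw [hx]; exact hmem p3 hp3S
      have hp0ext := extreme_mono htriP (hext p0 (hmem p0 hp0S)) hmemtri
      have := extremePoints_convexHull_subset hp0ext
      rcases this with hv | hv | hv
      · exact h01 (ii_inj hv)
      · exact h02 (ii_inj hv)
      · exact h30 (ii_inj hv).symm
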